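/- For the function f : ℝ² → ℝ defined by f(x) = |x₁ - 1| + |x₂| - 1 if x ∈ X₁ := (ℝ₋ × ℝ) ∪ (ℝ₊* × {0}), and f(x) = |x₁| + |x₂| otherwise, the set X₁ is locally thin (hence not ample), and the origin is the global minimizer of the restriction of f to cl(int(X₁)) ∪ X₂ = ℝ² \ (ℝ₊* × {0}), but the origin is not a local minimizer of f on ℝ². -/
import Mathlib

lemma interior_X1 (X₁ : Set (ℝ × ℝ))
    (hX₁ : X₁ = {p : ℝ × ℝ | p.1 ≤ 0} ∪ {p : ℝ × ℝ | 0 < p.1 ∧ p.2 = 0}) :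
    interior X₁ = {p : ℝ × ℝ | p.1 < 0} := by
  apply Set.Subset.antisymm
  · intro p hp
    rcases Metric.isOpen_iff.1 isOpen_interior p hp with ⟨ε, hε, hball⟩
    have hsub : Metric.ball p ε ⊆ X₁ := hball.trans interior_subset
    -- pick t ∈ {ε/4, ε/8} with p.2 + t ≠ 0
    obtain ⟨t, ht0, htε, ht2⟩ : ∃ t : ℝ, 0 < t ∧ t < ε ∧ p.2 + t ≠ 0 := by
      by_cases h : p.2 + ε/4 = 0
      · exact ⟨ε/8, by linarith, by linarith, by intro h8; rw [show p.2 = -(ε/4) by linarith] at h8; linarith⟩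
      · exact ⟨ε/4, by linarith, by linarith, h⟩
    have hmem : (p.1 + t, p.2 + t) ∈ Metric.ball p ε := by
      rw [Metric.mem_ball, Prod.dist_eq]
      simp only [Real.dist_eq]
      rw [show p.1 + t - p.1 = t by ring, show p.2 + t - p.2 = t by ring,
        abs_of_pos ht0]
      simpa using htε
    have := hsub hmem
    rw [hX₁] at this
    rcases this with h | h
    · simp only [Set.mem_setOf_eq] at h; simp only [Set.mem_setOf_eq]; linarith
    · exact absurd h.2 ht2
  · have : {p : ℝ × ℝ | p.1 < 0} ⊆ X₁ := by
      rw [hX₁]; intro p hp; exact Or.inl (show p.1 ≤ 0 from le_of_lt hp)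
    exact interior_maximal this (isOpen_Iio.preimage continuous_fst)

lemma closure_half : closure {p : ℝ × ℝ | p.1 < 0} = {p : ℝ × ℝ | p.1 ≤ 0} := by
  have h1 : {p : ℝ × ℝ | p.1 < 0} = Set.Iio (0:ℝ) ×ˢ (Set.univ : Set ℝ) := by
    ext p; simp [Set.mem_prod]
  have h2 : {p : ℝ × ℝ | p.1 ≤ 0} = Set.Iic (0:ℝ) ×ˢ (Set.univ : Set ℝ) := by
    ext p; simp [Set.mem_prod]
  rw [h1, h2, closure_prod_eq, closure_Iio, closure_univ]

theorem counterexample_assumption_X (f : ℝ × ℝ → ℝ)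
    (X₁ : Set (ℝ × ℝ))
    (hX₁ : X₁ = {p : ℝ × ℝ | p.1 ≤ 0} ∪ {p : ℝ × ℝ | 0 < p.1 ∧ p.2 = 0})
    (hf₁ : ∀ p ∈ X₁, f p = |p.1 - 1| + |p.2| - 1)
    (hf₂ : ∀ p ∉ X₁, f p = |p.1| + |p.2|) :
    (∃ N : Set (ℝ × ℝ), IsOpen N ∧ (X₁ ∩ N).Nonempty ∧ interior X₁ ∩ N = ∅) ∧
    ¬ (X₁ ⊆ closure (interior X₁)) ∧
    (closure (interior X₁) ∪ X₁ᶜ = {p : ℝ × ℝ | ¬ (0 < p.1 ∧ p.2 = 0)}) ∧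
    (∀ p : ℝ × ℝ, ¬ (0 < p.1 ∧ p.2 = 0) → f (0, 0) ≤ f p) ∧
    ¬ IsLocalMin f (0, 0) := by
  have hint : interior X₁ = {p : ℝ × ℝ | p.1 < 0} := interior_X1 X₁ hX₁
  have hcl : closure (interior X₁) = {p : ℝ × ℝ | p.1 ≤ 0} := by
    rw [hint, closure_half]
  have h10 : ((1:ℝ), (0:ℝ)) ∈ X₁ := by rw [hX₁]; exact Or.inr ⟨one_pos, rfl⟩
  have hf00 : f (0, 0) = 0 := by
    have h00 : ((0:ℝ), (0:ℝ)) ∈ X₁ := by rw [hX₁]; exact Or.inl (show (0:ℝ) ≤ 0 from le_rfl)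
    rw [hf₁ _ h00]; norm_num
  refine ⟨⟨{p : ℝ × ℝ | 0 < p.1}, isOpen_Ioi.preimage continuous_fst,
      ⟨(1, 0), h10, by norm_num⟩, ?_⟩, ?_, ?_, ?_, ?_⟩
  · rw [hint]; ext p; simp only [Set.mem_inter_iff, Set.mem_setOf_eq, Set.mem_empty_iff_false,
      iff_false]; rintro ⟨h1, h2⟩; linarith
  · intro h
    have := h h10
    rw [hcl] at this
    simp only [Set.mem_setOf_eq] at this; linarith
  · ext p
    constructor
    · rintro (h | h)
      · rw [hcl] at h; rintro ⟨h1, _⟩; simp only [Set.mem_setOf_eq] at h; linarith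
      · rw [hX₁] at h; simp only [Set.mem_compl_iff, Set.mem_union, Set.mem_setOf_eq, not_or] at h
        simp only [Set.mem_setOf_eq]; exact h.2
    · intro h
      rw [Set.mem_setOf_eq, not_and] at h
      by_cases h1 : p.1 ≤ 0
      · exact Or.inl (by rw [hcl]; exact h1)
      · refine Or.inr ?_
        rw [hX₁]
        simp only [Set.mem_compl_iff, Set.mem_union, Set.mem_setOf_eq, not_or, not_and]
        exact ⟨h1, h⟩
  · intro p hp
    rw [hf00]
    by_cases hmem : p ∈ X₁
    · rw [hf₁ _ hmem]
      have hle : p.1 ≤ 0 := by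
        rw [hX₁] at hmem
        rcases hmem with h | h
        · exact h
        · exact absurd h hp
      have : |p.1 - 1| = 1 - p.1 := by rw [abs_of_nonpos (by linarith : p.1 - 1 ≤ 0)]; ring
      rw [this]
      have := abs_nonneg p.2
      linarith
    · rw [hf₂ _ hmem]
      have := abs_nonneg p.1; have := abs_nonneg p.2; linarith
  · intro h
    rw [IsLocalMin, IsMinFilter, Metric.eventually_nhds_iff] at h
    rcases h with ⟨ε, hε, hball⟩
    set q : ℝ × ℝ := (min (ε/2) (1/2), 0) with hq
    have hq1 : 0 < q.1 := lt_min (by linarith) (by norm_num)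
    have hqmem : q ∈ X₁ := by rw [hX₁]; exact Or.inr ⟨hq1, rfl⟩
    have hdist : dist q ((0:ℝ), (0:ℝ)) < ε := by
      rw [Prod.dist_eq]
      simp only [Real.dist_eq, hq, sub_zero, abs_zero]
      rw [abs_of_pos (by simpa [hq] using hq1)]
      have : min (ε/2) (1/2) ≤ ε/2 := min_le_left _ _
      simp only [max_lt_iff]
      constructor <;> linarith
    have := hball hdist
    rw [hf00, hf₁ _ hqmem] at this
    have hle : q.1 ≤ 1/2 := min_le_right _ _
    have habs : |q.1 - 1| = 1 - q.1 := by rw [abs_of_nonpos (by linarith : q.1 - 1 ≤ 0)]; ring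
    rw [habs] at this
    simp only [hq, abs_zero] at this habs hq1 ⊢
    linarith
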